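/- Let b > 2 and let d be a positive integer. Let p be the smallest prime such that p divides b−1 and p does not divide d. Then every arithmetic progression with common difference d consisting entirely of b-anti-Niven numbers has length at most p−1. -/

import Mathlib

/-- Base-`b` digit sum of `n`. -/
def sdig (b n : ℕ) : ℕ := (Nat.digits b n).sum

/-- A positive integer `n` is `b`-anti-Niven if it is coprime to its base-`b` digit sum. -/
def AntiNiven (b n : ℕ) : Prop := 0 < n ∧ Nat.gcd n (sdig b n) = 1

theorem stmt_5 (b d p : ℕ) (hb : 2 < b) (hd : 0 < d)
    (hp : p.Prime) (hpb : p ∣ b - 1) (hpd : ¬ p ∣ d)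
    (hmin : ∀ q : ℕ, q.Prime → q ∣ b - 1 → ¬ q ∣ d → p ≤ q) :
    ∀ n t : ℕ, (∀ j : ℕ, j < t → AntiNiven b (n + j * d)) → t ≤ p - 1 := by
  intro n t hAP
  by_contra h
  push_neg at h
  have hp1 : 1 < p := hp.one_lt
  have hpt : p ≤ t := by omega
  haveI : Fact p.Prime := ⟨hp⟩
  -- choose j < p with p ∣ n + j * d
  have hdz : (d : ZMod p) ≠ 0 := by
    rw [Ne, ZMod.natCast_eq_zero_iff]; exact hpd
  set j : ℕ := ((-(n : ZMod p)) * (d : ZMod p)⁻¹).val with hj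
  have hjlt : j < p := ZMod.val_lt _
  have hdvd : p ∣ n + j * d := by
    rw [← ZMod.natCast_eq_zero_iff]
    push_cast
    rw [hj, ZMod.natCast_val, ZMod.cast_id]
    field_simp
    ring
  have hA := hAP j (lt_of_lt_of_le hjlt hpt)
  obtain ⟨hpos, hgcd⟩ := hA
  -- p divides the digit sum too
  have hbmod : b % p = 1 := by
    obtain ⟨k, hk⟩ := hpb
    have : b = p * k + 1 := by omega
    rw [this, add_comm, Nat.add_mul_mod_self_left, Nat.mod_eq_of_lt hp1]
  have hmod : (n + j * d) ≡ (Nat.digits b (n + j * d)).sum [MOD p] :=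
    Nat.modEq_digits_sum p b hbmod _
  have hdvd2 : p ∣ sdig b (n + j * d) :=
    Nat.modEq_zero_iff_dvd.mp (hmod.symm.trans (Nat.modEq_zero_iff_dvd.mpr hdvd))
  have : p ∣ 1 := hgcd ▸ Nat.dvd_gcd hdvd hdvd2
  exact absurd (Nat.le_of_dvd one_pos this) (by omega)
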